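/- For a uniformly random permutation of {1,...,m} constrained so that i_c precedes j_c, and for three distinct indices i < j < k none of whose ordered pairs (i,j), (i,k), (j,k) equals (i_c, j_c), the second moments satisfy E[I_{ij} I_{ik}] = 1/3, E[I_{ik} I_{jk}] = 1/3, and E[I_{ij} I_{jk}] = −1/3, identical to the unconstrained case. -/

import Mathlib

/-- The PWO factor: `1` if `i` precedes `j` in the permutation `π`, `-1` otherwise. -/
noncomputable def pwo {m : ℕ} (i j : Fin m) (π : Equiv.Perm (Fin m)) : ℝ :=
  if π.symm i < π.symm j then 1 else -1


namespace Stmt15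

open Finset Equiv

variable {m n : ℕ}

def patt (x : Fin n → Fin m) (π : Equiv.Perm (Fin m)) : Equiv.Perm (Fin n) :=
  Tuple.sort (fun t => π.symm (x t))

lemma patt_eq_iff {x : Fin n → Fin m} (hx : Function.Injective x)
    {π : Equiv.Perm (Fin m)} {σ : Equiv.Perm (Fin n)} :
    patt x π = σ ↔ StrictMono (fun t => π.symm (x (σ t))) := by
  have hv : Function.Injective (fun t => π.symm (x t)) :=
    fun a b hab => hx (π.symm.injective hab)
  have hτ : StrictMono (fun t => π.symm (x (patt x π t))) := by
    have := Tuple.monotone_sort (fun t => π.symm (x t))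
    exact this.strictMono_of_injective (fun a b hab => (patt x π).injective (hv hab))
  constructor
  · rintro rfl; exact hτ
  · intro hσ
    have key : ⇑((patt x π)⁻¹ * σ) = id := by
      have hsm : StrictMono ⇑((patt x π)⁻¹ * σ) := by
        intro a b hab
        have h1 : π.symm (x (σ a)) < π.symm (x (σ b)) := hσ hab
        have h2 : π.symm (x (patt x π ((patt x π)⁻¹ (σ a)))) <
            π.symm (x (patt x π ((patt x π)⁻¹ (σ b)))) := by
          simpa using h1
        exact hτ.lt_iff_lt.mp h2
      have hid : StrictMono (id : Fin n → Fin n) := strictMono_id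
      haveI : WellFoundedLT (Fin n) := Finite.to_wellFoundedLT
      exact (hsm.range_inj hid).mp (by
        rw [Set.range_id]
        exact Set.range_eq_univ.mpr ((patt x π)⁻¹ * σ).surjective)
    have : (patt x π)⁻¹ * σ = 1 := Equiv.ext fun t => congrFun key t
    have h2 := mul_eq_one_iff_inv_eq.mp this
    simp only [inv_inv] at h2
    exact h2

lemma patt_strictMono {x : Fin n → Fin m} (hx : Function.Injective x)
    (π : Equiv.Perm (Fin m)) :
    StrictMono (fun t => π.symm (x (patt x π t))) :=
  (patt_eq_iff hx).mp rfl

lemma patt_lt {x : Fin n → Fin m} (hx : Function.Injective x)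
    (π : Equiv.Perm (Fin m)) (a b : Fin n) :
    ((patt x π).symm a < (patt x π).symm b) ↔ π.symm (x a) < π.symm (x b) := by
  have hs := patt_strictMono hx π
  constructor
  · intro h
    have := hs h
    simpa using this
  · intro h
    have : π.symm (x (patt x π ((patt x π).symm a))) <
        π.symm (x (patt x π ((patt x π).symm b))) := by simpa using h
    exact hs.lt_iff_lt.mp this

lemma card_fiber_eq (x : Fin n → Fin m) (hx : Function.Injective x)
    (T : Finset (Equiv.Perm (Fin m)))
    (hT : ∀ (ρ : Equiv.Perm (Fin n)) (π : Equiv.Perm (Fin m)), π ∈ T →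
      (Equiv.Perm.viaEmbeddingHom ⟨x, hx⟩ ρ) * π ∈ T)
    (σ τ : Equiv.Perm (Fin n)) :
    (T.filter fun π => patt x π = σ).card = (T.filter fun π => patt x π = τ).card := by
  classical
  set ι : Fin n ↪ Fin m := ⟨x, hx⟩ with hι
  set e : Equiv.Perm (Fin m) := Equiv.Perm.viaEmbeddingHom ι (σ * τ⁻¹) with he
  have hinv : e⁻¹ = Equiv.Perm.viaEmbeddingHom ι (σ * τ⁻¹)⁻¹ := (map_inv _ _).symm
  have happ : ∀ π : Equiv.Perm (Fin m), ∀ t,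
      (e⁻¹ * π).symm (x (τ t)) = π.symm (x (σ t)) := by
    intro π t
    have h1 : (e⁻¹ * π).symm (x (τ t)) = π.symm (e (x (τ t))) := by
      show ((e⁻¹ * π)⁻¹) (x (τ t)) = π.symm (e (x (τ t)))
      rw [mul_inv_rev, inv_inv]
      rfl
    rw [h1]
    have h2 : e (x (τ t)) = x (σ t) := by
      have := Equiv.Perm.viaEmbedding_apply (σ * τ⁻¹) ι (τ t)
      rw [he, Equiv.Perm.viaEmbeddingHom_apply]
      exact this.trans (by simp [hι])
    rw [h2]
  have hkey : ∀ π : Equiv.Perm (Fin m), patt x (e⁻¹ * π) = τ ↔ patt x π = σ := by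
    intro π
    rw [patt_eq_iff hx, patt_eq_iff hx]
    constructor
    · intro h
      have : (fun t => (e⁻¹ * π).symm (x (τ t))) = fun t => π.symm (x (σ t)) :=
        funext fun t => happ π t
      rwa [this] at h
    · intro h
      have : (fun t => (e⁻¹ * π).symm (x (τ t))) = fun t => π.symm (x (σ t)) :=
        funext fun t => happ π t
      rwa [← this] at h
  refine Finset.card_bij' (fun π _ => e⁻¹ * π) (fun π _ => e * π) ?_ ?_ ?_ ?_
  · intro π hπ
    simp only [mem_filter] at hπ ⊢
    refine ⟨?_, (hkey π).mpr hπ.2⟩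
    · rw [hinv]; exact hT _ _ hπ.1
  · intro π hπ
    simp only [mem_filter] at hπ ⊢
    constructor
    · exact hT _ _ hπ.1
    · have : patt x (e⁻¹ * (e * π)) = τ := by
        rw [inv_mul_cancel_left]; exact hπ.2
      exact (hkey (e * π)).mp this
  · intro π _; show e * (e⁻¹ * π) = π; rw [mul_inv_cancel_left]
  · intro π _; show e⁻¹ * (e * π) = π; rw [inv_mul_cancel_left]

lemma card_filter_patt (x : Fin n → Fin m) (hx : Function.Injective x)
    (T : Finset (Equiv.Perm (Fin m)))
    (hT : ∀ (ρ : Equiv.Perm (Fin n)) (π : Equiv.Perm (Fin m)), π ∈ T →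
      (Equiv.Perm.viaEmbeddingHom ⟨x, hx⟩ ρ) * π ∈ T)
    (p : Equiv.Perm (Fin n) → Prop) [DecidablePred p] :
    (T.filter fun π => p (patt x π)).card
      = (univ.filter p).card * (T.filter fun π => patt x π = 1).card := by
  classical
  rw [Finset.card_eq_sum_card_fiberwise
    (f := fun π => patt x π) (t := univ.filter p)
    (fun π hπ => by simp only [mem_coe, mem_filter] at hπ ⊢; exact ⟨mem_univ _, hπ.2⟩)]
  have h1 : ∀ σ ∈ univ.filter p,
      ((T.filter fun π => p (patt x π)).filter fun π => patt x π = σ).card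
        = (T.filter fun π => patt x π = 1).card := by
    intro σ hσ
    simp only [mem_filter] at hσ
    rw [Finset.filter_filter]
    have h2 : (T.filter fun π => p (patt x π) ∧ patt x π = σ)
        = T.filter fun π => patt x π = σ := by
      apply Finset.filter_congr
      intro π _
      constructor
      · rintro ⟨_, h⟩; exact h
      · intro h; exact ⟨h ▸ hσ.2, h⟩
    rw [h2]
    exact card_fiber_eq x hx T hT σ 1
  rw [Finset.sum_congr rfl h1, Finset.sum_const, smul_eq_mul]

lemma master (x : Fin n → Fin m) (hx : Function.Injective x)
    (T : Finset (Equiv.Perm (Fin m)))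
    (hT : ∀ (ρ : Equiv.Perm (Fin n)) (π : Equiv.Perm (Fin m)), π ∈ T →
      (Equiv.Perm.viaEmbeddingHom ⟨x, hx⟩ ρ) * π ∈ T)
    (p : Equiv.Perm (Fin n) → Prop) [DecidablePred p]
    (a b c d : Fin n)
    (hne : (T.filter fun π => p (patt x π)).Nonempty)
    (Dp Dq : ℕ)
    (hDp : (univ.filter p).card = Dp)
    (hDq : (univ.filter fun σ : Equiv.Perm (Fin n) =>
      p σ ∧ ((σ.symm a < σ.symm b) ↔ (σ.symm c < σ.symm d))).card = Dq)
    (r : ℝ) (hr : (Dp : ℝ) * r = 2 * Dq - Dp) :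
    (∑ π ∈ T.filter fun π => p (patt x π), pwo (x a) (x b) π * pwo (x c) (x d) π) /
      (((T.filter fun π => p (patt x π)).card : ℕ) : ℝ) = r := by
  classical
  set c0 := (T.filter fun π => patt x π = 1).card with hc0
  set S' := T.filter fun π => p (patt x π) with hS'
  set E := T.filter (fun π => p (patt x π) ∧
      ((π.symm (x a) < π.symm (x b)) ↔ (π.symm (x c) < π.symm (x d)))) with hE
  have hScard : S'.card = Dp * c0 := by
    rw [hS', card_filter_patt x hx T hT p, hDp]
  have hEcard : E.card = Dq * c0 := by
    have h1 : E = T.filter fun π => (fun σ : Equiv.Perm (Fin n) =>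
        p σ ∧ ((σ.symm a < σ.symm b) ↔ (σ.symm c < σ.symm d))) (patt x π) := by
      apply Finset.filter_congr
      intro π _
      show _ ↔ p (patt x π) ∧
        ((((patt x π).symm a < (patt x π).symm b)) ↔ (((patt x π).symm c < (patt x π).symm d)))
      rw [patt_lt hx π a b, patt_lt hx π c d]
    have h2 := card_filter_patt x hx T hT (fun σ : Equiv.Perm (Fin n) =>
      p σ ∧ ((σ.symm a < σ.symm b) ↔ (σ.symm c < σ.symm d)))
    rw [hDq] at h2
    rw [h1]
    exact h2
  have hEsub : E ⊆ S' := by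
    intro π h
    rw [hE, Finset.mem_filter] at h
    rw [hS', Finset.mem_filter]
    exact ⟨h.1, h.2.1⟩
  have hsum : (∑ π ∈ S', pwo (x a) (x b) π * pwo (x c) (x d) π)
      = 2 * (E.card : ℝ) - (S'.card : ℝ) := by
    have hsplit : ∀ π ∈ S', pwo (x a) (x b) π * pwo (x c) (x d) π =
        if ((π.symm (x a) < π.symm (x b)) ↔ (π.symm (x c) < π.symm (x d)))
          then (1 : ℝ) else -1 := by
      intro π _
      by_cases hA : π.symm (x a) < π.symm (x b) <;>
        by_cases hB : π.symm (x c) < π.symm (x d) <;>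
          simp [pwo, hA, hB]
    rw [Finset.sum_congr rfl hsplit, Finset.sum_ite, Finset.sum_const, Finset.sum_const]
    have hfE : S'.filter (fun π =>
        ((π.symm (x a) < π.symm (x b)) ↔ (π.symm (x c) < π.symm (x d)))) = E := by
      rw [hS', hE, Finset.filter_filter]
    have hfEc : (S'.filter (fun π =>
        ¬((π.symm (x a) < π.symm (x b)) ↔ (π.symm (x c) < π.symm (x d))))).card
        = S'.card - E.card := by
      have := Finset.card_filter_add_card_filter_not
        (s := S') (p := fun π =>
          ((π.symm (x a) < π.symm (x b)) ↔ (π.symm (x c) < π.symm (x d))))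
      rw [hfE] at this
      omega
    rw [hfE, hfEc]
    have hle : E.card ≤ S'.card := Finset.card_le_card hEsub
    simp only [nsmul_eq_mul, mul_one, mul_neg_one]
    rw [Nat.cast_sub hle]
    ring
  rw [hsum, hScard, hEcard]
  have hS0 : S'.card ≠ 0 := Finset.card_ne_zero_of_mem hne.choose_spec
  rw [hScard] at hS0
  have hc0' : ((Dp * c0 : ℕ) : ℝ) ≠ 0 := Nat.cast_ne_zero.mpr hS0
  rw [div_eq_iff hc0']
  push_cast
  linear_combination (-(c0 : ℝ)) * hr

lemma S_nonempty (hm : 1 ≤ m) (ic jc : Fin m) (hc : ic ≠ jc) :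
    (univ.filter fun π : Equiv.Perm (Fin m) => π.symm ic < π.symm jc).Nonempty := by
  have hz : (0 : ℕ) < m := hm
  set z : Fin m := ⟨0, hz⟩ with hzdef
  refine ⟨Equiv.swap ic z, ?_⟩
  simp only [mem_filter, mem_univ, true_and, Equiv.symm_swap]
  have h1 : Equiv.swap ic z ic = z := Equiv.swap_apply_left ic z
  have h2 : Equiv.swap ic z jc ≠ z := by
    intro h
    exact hc ((Equiv.swap ic z).injective (h.trans h1.symm)).symm
  rw [h1]
  have h3 : (Equiv.swap ic z jc).val ≠ 0 := fun h => h2 (Fin.ext h)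
  have h4 : z.val = 0 := rfl
  rw [Fin.lt_def]
  omega

lemma count4_p : ∀ u v : Fin 4, u ≠ v →
    (univ.filter fun σ : Equiv.Perm (Fin 4) => σ.symm u < σ.symm v).card = 12 := by decide

lemma count4_q1 : ∀ u v : Fin 4, (u = 3 ∨ v = 3) → u ≠ v →
    (univ.filter fun σ : Equiv.Perm (Fin 4) => (σ.symm u < σ.symm v) ∧
      ((σ.symm 0 < σ.symm 1) ↔ (σ.symm 0 < σ.symm 2))).card = 8 := by decide

lemma count4_q2 : ∀ u v : Fin 4, (u = 3 ∨ v = 3) → u ≠ v →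
    (univ.filter fun σ : Equiv.Perm (Fin 4) => (σ.symm u < σ.symm v) ∧
      ((σ.symm 0 < σ.symm 2) ↔ (σ.symm 1 < σ.symm 2))).card = 8 := by decide

lemma count4_q3 : ∀ u v : Fin 4, (u = 3 ∨ v = 3) → u ≠ v →
    (univ.filter fun σ : Equiv.Perm (Fin 4) => (σ.symm u < σ.symm v) ∧
      ((σ.symm 0 < σ.symm 1) ↔ (σ.symm 1 < σ.symm 2))).card = 4 := by decide

lemma count3_p :
    (univ.filter fun _ : Equiv.Perm (Fin 3) => True).card = 6 := by decide

lemma count3_q1 :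
    (univ.filter fun σ : Equiv.Perm (Fin 3) => True ∧
      ((σ.symm 0 < σ.symm 1) ↔ (σ.symm 0 < σ.symm 2))).card = 4 := by decide

lemma count3_q2 :
    (univ.filter fun σ : Equiv.Perm (Fin 3) => True ∧
      ((σ.symm 0 < σ.symm 2) ↔ (σ.symm 1 < σ.symm 2))).card = 4 := by decide

lemma count3_q3 :
    (univ.filter fun σ : Equiv.Perm (Fin 3) => True ∧
      ((σ.symm 0 < σ.symm 1) ↔ (σ.symm 1 < σ.symm 2))).card = 2 := by decide

set_option maxHeartbeats 1000000 in
/-- case where exactly one of ic, jc lies in {i,j,k}; the 4 relevant points are `x`. -/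
lemma case4pt (hm : 3 ≤ m) (x : Fin 4 → Fin m) (hx : Function.Injective x)
    (u v : Fin 4) (huv : u ≠ v) (h3 : u = 3 ∨ v = 3) :
    (∑ π ∈ univ.filter (fun π : Equiv.Perm (Fin m) => π.symm (x u) < π.symm (x v)),
        pwo (x 0) (x 1) π * pwo (x 0) (x 2) π) /
      (((univ.filter (fun π : Equiv.Perm (Fin m) =>
        π.symm (x u) < π.symm (x v))).card : ℕ) : ℝ) = 1/3 ∧
    (∑ π ∈ univ.filter (fun π : Equiv.Perm (Fin m) => π.symm (x u) < π.symm (x v)),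
        pwo (x 0) (x 2) π * pwo (x 1) (x 2) π) /
      (((univ.filter (fun π : Equiv.Perm (Fin m) =>
        π.symm (x u) < π.symm (x v))).card : ℕ) : ℝ) = 1/3 ∧
    (∑ π ∈ univ.filter (fun π : Equiv.Perm (Fin m) => π.symm (x u) < π.symm (x v)),
        pwo (x 0) (x 1) π * pwo (x 1) (x 2) π) /
      (((univ.filter (fun π : Equiv.Perm (Fin m) =>
        π.symm (x u) < π.symm (x v))).card : ℕ) : ℝ) = -(1/3) := by
  classical
  have hxuv : x u ≠ x v := fun h => huv (hx h)
  have hSeq : (univ.filter fun π : Equiv.Perm (Fin m) => π.symm (x u) < π.symm (x v))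
      = univ.filter fun π =>
        (fun σ : Equiv.Perm (Fin 4) => σ.symm u < σ.symm v) (patt x π) := by
    apply Finset.filter_congr
    intro π _
    show _ ↔ ((patt x π).symm u < (patt x π).symm v)
    rw [patt_lt hx π u v]
  have hT : ∀ (ρ : Equiv.Perm (Fin 4)) (π : Equiv.Perm (Fin m)), π ∈ (univ : Finset _) →
      (Equiv.Perm.viaEmbeddingHom ⟨x, hx⟩ ρ) * π ∈ univ := fun _ _ _ => mem_univ _
  have hne : ((univ : Finset (Equiv.Perm (Fin m))).filter fun π =>
      (fun σ : Equiv.Perm (Fin 4) => σ.symm u < σ.symm v) (patt x π)).Nonempty := by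
    rw [← hSeq]
    exact S_nonempty (by omega) _ _ hxuv
  rw [hSeq]
  refine ⟨?_, ?_, ?_⟩
  · exact master x hx univ hT _ 0 1 0 2 hne 12 8 (count4_p u v huv)
      (count4_q1 u v h3 huv) (1/3) (by norm_num)
  · exact master x hx univ hT _ 0 2 1 2 hne 12 8 (count4_p u v huv)
      (count4_q2 u v h3 huv) (1/3) (by norm_num)
  · exact master x hx univ hT _ 0 1 1 2 hne 12 4 (count4_p u v huv)
      (count4_q3 u v h3 huv) (-(1/3)) (by norm_num)

/-- case where ic, jc both avoid {i,j,k} (the tuple `x`). -/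
lemma case3pt (hm : 3 ≤ m) (x : Fin 3 → Fin m) (hx : Function.Injective x)
    (ic jc : Fin m) (hc : ic ≠ jc)
    (hic : ic ∉ Set.range x) (hjc : jc ∉ Set.range x) :
    (∑ π ∈ univ.filter (fun π : Equiv.Perm (Fin m) => π.symm ic < π.symm jc),
        pwo (x 0) (x 1) π * pwo (x 0) (x 2) π) /
      (((univ.filter (fun π : Equiv.Perm (Fin m) =>
        π.symm ic < π.symm jc)).card : ℕ) : ℝ) = 1/3 ∧
    (∑ π ∈ univ.filter (fun π : Equiv.Perm (Fin m) => π.symm ic < π.symm jc),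
        pwo (x 0) (x 2) π * pwo (x 1) (x 2) π) /
      (((univ.filter (fun π : Equiv.Perm (Fin m) =>
        π.symm ic < π.symm jc)).card : ℕ) : ℝ) = 1/3 ∧
    (∑ π ∈ univ.filter (fun π : Equiv.Perm (Fin m) => π.symm ic < π.symm jc),
        pwo (x 0) (x 1) π * pwo (x 1) (x 2) π) /
      (((univ.filter (fun π : Equiv.Perm (Fin m) =>
        π.symm ic < π.symm jc)).card : ℕ) : ℝ) = -(1/3) := by
  classical
  set T := univ.filter (fun π : Equiv.Perm (Fin m) => π.symm ic < π.symm jc) with hTdef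
  have hT : ∀ (ρ : Equiv.Perm (Fin 3)) (π : Equiv.Perm (Fin m)), π ∈ T →
      (Equiv.Perm.viaEmbeddingHom ⟨x, hx⟩ ρ) * π ∈ T := by
    intro ρ π hπ
    rw [hTdef, mem_filter] at hπ ⊢
    refine ⟨mem_univ _, ?_⟩
    set e := Equiv.Perm.viaEmbeddingHom ⟨x, hx⟩ ρ with he
    have hinv : e⁻¹ = Equiv.Perm.viaEmbeddingHom ⟨x, hx⟩ ρ⁻¹ := (map_inv _ _).symm
    have key : ∀ w : Fin m, w ∉ Set.range x → (e * π).symm w = π.symm w := by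
      intro w hw
      show ((e * π)⁻¹) w = π.symm w
      rw [mul_inv_rev]
      have : e⁻¹ w = w := by
        rw [hinv, Equiv.Perm.viaEmbeddingHom_apply]
        exact Equiv.Perm.viaEmbedding_apply_of_notMem ρ⁻¹ ⟨x, hx⟩ w (by simpa using hw)
      show π⁻¹ (e⁻¹ w) = π.symm w
      rw [this]
      rfl
    rw [key ic hic, key jc hjc]
    exact hπ.2
  have hfil : (T.filter fun π =>
      (fun _ : Equiv.Perm (Fin 3) => True) (patt x π)) = T := Finset.filter_true_of_mem (fun _ _ => trivial)
  have hne : (T.filter fun π =>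
      (fun _ : Equiv.Perm (Fin 3) => True) (patt x π)).Nonempty := by
    rw [hfil]
    exact S_nonempty (by omega) _ _ hc
  refine ⟨?_, ?_, ?_⟩
  · have H := master x hx T hT (fun _ => True) 0 1 0 2 hne 6 4 count3_p count3_q1
      (1/3) (by norm_num)
    rwa [hfil] at H
  · have H := master x hx T hT (fun _ => True) 0 2 1 2 hne 6 4 count3_p count3_q2
      (1/3) (by norm_num)
    rwa [hfil] at H
  · have H := master x hx T hT (fun _ => True) 0 1 1 2 hne 6 2 count3_p count3_q3
      (-(1/3)) (by norm_num)
    rwa [hfil] at H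

lemma inj4 {a b c d : Fin m} (h1 : a ≠ b) (h2 : a ≠ c) (h3 : a ≠ d)
    (h4 : b ≠ c) (h5 : b ≠ d) (h6 : c ≠ d) : Function.Injective ![a, b, c, d] := by
  intro s t h
  fin_cases s <;> fin_cases t <;> simp_all

lemma inj3 {a b c : Fin m} (h1 : a ≠ b) (h2 : a ≠ c) (h3 : b ≠ c) :
    Function.Injective ![a, b, c] := by
  intro s t h
  fin_cases s <;> fin_cases t <;> simp_all

end Stmt15

open Finset Equiv Stmt15

/-- for permutations uniform on those with `i_c` before `j_c`
and distinct `i < j < k` none of whose pairs is the constrained pair,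
`E[I_ij I_ik] = 1/3`, `E[I_ik I_jk] = 1/3`, `E[I_ij I_jk] = -1/3`, as in the
unconstrained case. -/
theorem stmt15 (m : ℕ) (hm : 3 ≤ m) (ic jc : Fin m) (hc : ic ≠ jc)
    (i j k : Fin m) (hij : i < j) (hjk : j < k)
    (h1 : ¬((i = ic ∧ j = jc) ∨ (i = jc ∧ j = ic)))
    (h2 : ¬((i = ic ∧ k = jc) ∨ (i = jc ∧ k = ic)))
    (h3 : ¬((j = ic ∧ k = jc) ∨ (j = jc ∧ k = ic))) :
    let S := Finset.univ.filter fun π : Equiv.Perm (Fin m) => π.symm ic < π.symm jc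
    (∑ π ∈ S, pwo i j π * pwo i k π) / (S.card : ℝ) = 1 / 3 ∧
    (∑ π ∈ S, pwo i k π * pwo j k π) / (S.card : ℝ) = 1 / 3 ∧
    (∑ π ∈ S, pwo i j π * pwo j k π) / (S.card : ℝ) = -(1 / 3) := by
  classical
  intro S
  have hS : S = Finset.univ.filter
      (fun π : Equiv.Perm (Fin m) => π.symm ic < π.symm jc) := rfl
  have hij' : i ≠ j := ne_of_lt hij
  have hjk' : j ≠ k := ne_of_lt hjk
  have hik' : i ≠ k := ne_of_lt (hij.trans hjk)
  by_cases e1 : ic = i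
  · have hjci : jc ≠ i := fun h => hc (e1.trans h.symm)
    have hjcj : jc ≠ j := fun h => h1 (Or.inl ⟨e1.symm, h.symm⟩)
    have hjck : jc ≠ k := fun h => h2 (Or.inl ⟨e1.symm, h.symm⟩)
    have hx : Function.Injective ![i, j, k, jc] :=
      inj4 hij' hik' hjci.symm hjk' hjcj.symm hjck.symm
    have H := case4pt hm ![i, j, k, jc] hx 0 3 (by decide) (Or.inr rfl)
    simp only [Matrix.cons_val_zero, Matrix.cons_val_one, Matrix.head_cons,
      Matrix.cons_val_two, Matrix.tail_cons, Matrix.cons_val_three,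
      Matrix.cons_val_fin_one] at H
    rw [hS, e1]
    exact H
  · by_cases e2 : ic = j
    · have hjci : jc ≠ i := fun h => h1 (Or.inr ⟨h.symm, e2.symm⟩)
      have hjcj : jc ≠ j := fun h => hc (e2.trans h.symm)
      have hjck : jc ≠ k := fun h => h3 (Or.inl ⟨e2.symm, h.symm⟩)
      have hx : Function.Injective ![i, j, k, jc] :=
        inj4 hij' hik' hjci.symm hjk' hjcj.symm hjck.symm
      have H := case4pt hm ![i, j, k, jc] hx 1 3 (by decide) (Or.inr rfl)
      simp only [Matrix.cons_val_zero, Matrix.cons_val_one, Matrix.head_cons,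
        Matrix.cons_val_two, Matrix.tail_cons, Matrix.cons_val_three,
        Matrix.cons_val_fin_one] at H
      rw [hS, e2]
      exact H
    · by_cases e3 : ic = k
      · have hjci : jc ≠ i := fun h => h2 (Or.inr ⟨h.symm, e3.symm⟩)
        have hjcj : jc ≠ j := fun h => h3 (Or.inr ⟨h.symm, e3.symm⟩)
        have hjck : jc ≠ k := fun h => hc (e3.trans h.symm)
        have hx : Function.Injective ![i, j, k, jc] :=
          inj4 hij' hik' hjci.symm hjk' hjcj.symm hjck.symm
        have H := case4pt hm ![i, j, k, jc] hx 2 3 (by decide) (Or.inr rfl)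
        simp only [Matrix.cons_val_zero, Matrix.cons_val_one, Matrix.head_cons,
          Matrix.cons_val_two, Matrix.tail_cons, Matrix.cons_val_three,
          Matrix.cons_val_fin_one] at H
        rw [hS, e3]
        exact H
      · by_cases f1 : jc = i
        · have hx : Function.Injective ![i, j, k, ic] :=
            inj4 hij' hik' (fun h => e1 h.symm) hjk' (fun h => e2 h.symm)
              (fun h => e3 h.symm)
          have H := case4pt hm ![i, j, k, ic] hx 3 0 (by decide) (Or.inl rfl)
          simp only [Matrix.cons_val_zero, Matrix.cons_val_one, Matrix.head_cons,
            Matrix.cons_val_two, Matrix.tail_cons, Matrix.cons_val_three,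
            Matrix.cons_val_fin_one] at H
          rw [hS, f1]
          exact H
        · by_cases f2 : jc = j
          · have hx : Function.Injective ![i, j, k, ic] :=
              inj4 hij' hik' (fun h => e1 h.symm) hjk' (fun h => e2 h.symm)
                (fun h => e3 h.symm)
            have H := case4pt hm ![i, j, k, ic] hx 3 1 (by decide) (Or.inl rfl)
            simp only [Matrix.cons_val_zero, Matrix.cons_val_one, Matrix.head_cons,
              Matrix.cons_val_two, Matrix.tail_cons, Matrix.cons_val_three,
              Matrix.cons_val_fin_one] at H
            rw [hS, f2]
            exact H
          · by_cases f3 : jc = k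
            · have hx : Function.Injective ![i, j, k, ic] :=
                inj4 hij' hik' (fun h => e1 h.symm) hjk' (fun h => e2 h.symm)
                  (fun h => e3 h.symm)
              have H := case4pt hm ![i, j, k, ic] hx 3 2 (by decide) (Or.inl rfl)
              simp only [Matrix.cons_val_zero, Matrix.cons_val_one, Matrix.head_cons,
                Matrix.cons_val_two, Matrix.tail_cons, Matrix.cons_val_three,
                Matrix.cons_val_fin_one] at H
              rw [hS, f3]
              exact H
            · have hx : Function.Injective ![i, j, k] := inj3 hij' hik' hjk'
              have hic : ic ∉ Set.range ![i, j, k] := by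
                rintro ⟨t, ht⟩
                fin_cases t <;> simp at ht <;> simp_all
              have hjc : jc ∉ Set.range ![i, j, k] := by
                rintro ⟨t, ht⟩
                fin_cases t <;> simp at ht <;> simp_all
              have H := case3pt hm ![i, j, k] hx ic jc hc hic hjc
              simp only [Matrix.cons_val_zero, Matrix.cons_val_one, Matrix.head_cons,
                Matrix.cons_val_two, Matrix.tail_cons] at H
              rw [hS]
              exact H
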